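/- Let n ≥ 6 be an even integer and let π ∈ S_n be such that the permutation graph G_π is connected with domination number n/2. If 2 ≤ i ≤ n−2 and both i and i+1 are leaves of G_π, then π⁻¹(i) = i−1 and π⁻¹(i+1) = i+2. -/

import Mathlib

/-- The permutation graph of `π`: vertices `0,…,n-1` (0-indexed version of `1,…,n`),
with `i < j` adjacent iff `π⁻¹ i > π⁻¹ j`. -/
def permGraph {n : ℕ} (π : Equiv.Perm (Fin n)) : SimpleGraph (Fin n) where
  Adj i j := (i < j ∧ π.symm j < π.symm i) ∨ (j < i ∧ π.symm i < π.symm j)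
  symm := ⟨by intro i j h; tauto⟩
  loopless := ⟨by intro i h; rcases h with ⟨h, _⟩ | ⟨h, _⟩ <;> exact lt_irrefl i h⟩

/-- `D` dominates `G`: every vertex is in `D` or adjacent to an element of `D`. -/
def Dominates {V : Type*} (G : SimpleGraph V) (D : Set V) : Prop :=
  ∀ v, v ∈ D ∨ ∃ d ∈ D, G.Adj v d

/-- The domination number: minimum cardinality of a dominating set. -/
noncomputable def domNumber {V : Type*} [Fintype V] (G : SimpleGraph V) : ℕ :=
  sInf {k | ∃ D : Finset V, D.card = k ∧ Dominates G ↑D}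

/-- Closed neighborhood `N[x]`. -/
def closedNbhd {V : Type*} (G : SimpleGraph V) (x : V) : Set V :=
  {y | y = x ∨ G.Adj x y}

/-- Degree of a vertex. -/
noncomputable def deg {V : Type*} (G : SimpleGraph V) (v : V) : ℕ :=
  (G.neighborSet v).ncard

lemma exists_adj_dist_pred {V : Type*} {G : SimpleGraph V} {x v : V}
    (h : G.Reachable x v) (hd : G.dist x v ≠ 0) :
    ∃ w, G.Adj v w ∧ G.dist x w + 1 = G.dist x v := by
  obtain ⟨p, hp⟩ := (h.symm).exists_walk_length_eq_dist
  rw [SimpleGraph.dist_comm] at hp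
  cases p with
  | nil => exact absurd SimpleGraph.dist_self hd
  | cons hadj q =>
    rename_i w
    refine ⟨w, hadj, ?_⟩
    have h1 : G.dist x w ≤ q.length := by
      have := SimpleGraph.dist_le q.reverse
      rwa [SimpleGraph.Walk.length_reverse] at this
    have h2 : G.dist x v ≤ G.dist x w + 1 := by
      have hrxw : G.Reachable x w := h.trans ⟨SimpleGraph.Walk.cons hadj SimpleGraph.Walk.nil⟩
      obtain ⟨s, hs⟩ := hrxw.exists_walk_length_eq_dist
      have := SimpleGraph.dist_le (s.concat hadj.symm)
      rwa [SimpleGraph.Walk.length_concat, hs] at this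
    simp only [SimpleGraph.Walk.length_cons] at hp
    omega

lemma dom_contra {n : ℕ} (hn6 : 6 ≤ n) (hev : Even n) {G : SimpleGraph (Fin n)}
    (hconn : G.Connected) {x y z : Fin n} (hxy : x ≠ y) (hnadj : ¬ G.Adj x y)
    (hxz : G.Adj x z) (hyz : G.Adj y z)
    (hx : G.neighborSet x = {z}) (hy : G.neighborSet y = {z}) :
    domNumber G ≠ n / 2 := by
  classical
  intro hdom
  set d : Fin n → ℕ := fun v => G.dist x v with hd
  have hreach : ∀ v, G.Reachable x v := fun v => hconn.preconnected x v
  have hdz : d z = 1 := SimpleGraph.dist_eq_one_iff_adj.mpr hxz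
  have hdx : d x = 0 := SimpleGraph.dist_self
  have hdy : d y = 2 := by
    show G.dist x y = 2
    have h1 : G.dist x y ≤ 2 := by
      have := SimpleGraph.dist_le
        (SimpleGraph.Walk.cons hxz (SimpleGraph.Walk.cons hyz.symm SimpleGraph.Walk.nil))
      simpa using this
    have h2 : G.dist x y ≠ 1 := fun h => hnadj (SimpleGraph.dist_eq_one_iff_adj.mp h)
    have h3 : G.dist x y ≠ 0 := by
      intro h0; exact hxy (hconn.dist_eq_zero_iff.mp h0)
    omega
  set V0 : Finset (Fin n) := Finset.univ.filter (fun v => d v % 2 = 0) with hV0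
  set V1 : Finset (Fin n) := Finset.univ.filter (fun v => ¬ d v % 2 = 0) with hV1
  have hsum : V0.card + V1.card = n := by
    rw [hV0, hV1, Finset.card_filter_add_card_filter_not]
    simp
  have hzV1 : z ∈ V1 := by simp [hV1, hdz]
  have step : ∀ v : Fin n, v ≠ x → ∃ w, G.Adj v w ∧ d w + 1 = d v := by
    intro v hv
    apply exists_adj_dist_pred (hreach v)
    intro h0; exact hv ((hconn.dist_eq_zero_iff.mp h0).symm)
  have hdomV1 : Dominates G ↑V1 := by
    intro v
    by_cases hp : d v % 2 = 0
    · right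
      by_cases hvx : v = x
      · exact ⟨z, hzV1, hvx ▸ hxz⟩
      · obtain ⟨w, hw, hwd⟩ := step v hvx
        have hv0 : d v ≠ 0 := fun h0 => hvx ((hconn.dist_eq_zero_iff.mp h0).symm)
        refine ⟨w, ?_, hw⟩
        simp only [hV1, Finset.coe_filter, Set.mem_setOf_eq, Finset.mem_univ, true_and]
        omega
    · left
      simp only [hV1, Finset.coe_filter, Set.mem_setOf_eq, Finset.mem_univ, true_and]
      exact hp
  have hxV0 : x ∈ V0 := by simp [hV0, hdx]
  have hyV0 : y ∈ V0 := by simp [hV0, hdy]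
  have hzV0 : z ∉ V0 := by simp [hV0, hdz]
  set D0 : Finset (Fin n) := insert z ((V0.erase x).erase y) with hD0
  have hdomD0 : Dominates G ↑D0 := by
    intro v
    by_cases hp : d v % 2 = 0
    · by_cases hvx : v = x
      · right; exact ⟨z, by simp [hD0], hvx ▸ hxz⟩
      · by_cases hvy : v = y
        · right; exact ⟨z, by simp [hD0], hvy ▸ hyz⟩
        · left
          simp only [hD0, Finset.coe_insert, Set.mem_insert_iff, Finset.mem_coe,
            Finset.mem_erase]
          right
          exact ⟨hvy, hvx, by simp [hV0, hp]⟩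
    · by_cases hvz : v = z
      · left; simp [hD0, hvz]
      · obtain ⟨w, hw, hwd⟩ := step v (by rintro rfl; simp [hdx] at hp)
        have hwv0 : d w % 2 = 0 := by omega
        by_cases hwx : w = x
        · exfalso; apply hvz
          have hmem : v ∈ G.neighborSet x := by
            rw [SimpleGraph.mem_neighborSet]; exact (hwx ▸ hw).symm
          rw [hx] at hmem; exact hmem
        · by_cases hwy : w = y
          · exfalso; apply hvz
            have hmem : v ∈ G.neighborSet y := by
              rw [SimpleGraph.mem_neighborSet]; exact (hwy ▸ hw).symm
            rw [hy] at hmem; exact hmem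
          · right
            refine ⟨w, ?_, hw⟩
            simp only [hD0, Finset.coe_insert, Set.mem_insert_iff, Finset.mem_coe,
              Finset.mem_erase]
            right
            exact ⟨hwy, hwx, by simp [hV0, hwv0]⟩
  have hV0two : 1 < V0.card := Finset.one_lt_card.mpr ⟨x, hxV0, y, hyV0, hxy⟩
  have hcard0 : D0.card ≤ V0.card - 1 := by
    have h1 : y ∈ V0.erase x := Finset.mem_erase.mpr ⟨fun h => hxy h.symm, hyV0⟩
    have h2 : ((V0.erase x).erase y).card = V0.card - 1 - 1 := by
      rw [Finset.card_erase_of_mem h1, Finset.card_erase_of_mem hxV0]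
    have h3 : D0.card ≤ ((V0.erase x).erase y).card + 1 :=
      Finset.card_insert_le z ((V0.erase x).erase y)
    omega
  have hmem : ∀ (D : Finset (Fin n)), Dominates G ↑D →
      sInf {k | ∃ D' : Finset (Fin n), D'.card = k ∧ Dominates G ↑D'} ≤ D.card :=
    fun D hD => Nat.sInf_le ⟨D, rfl, hD⟩
  rw [domNumber] at hdom
  obtain ⟨m, hm⟩ := hev
  by_cases hc : V1.card ≤ n / 2 - 1
  · have := hmem V1 hdomV1; omega
  · have := hmem D0 hdomD0; omega

lemma permGraph_adj {n : ℕ} (π : Equiv.Perm (Fin n)) (a b : Fin n) :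
    (permGraph π).Adj a b ↔ (a < b ∧ π.symm b < π.symm a) ∨ (b < a ∧ π.symm a < π.symm b) :=
  Iff.rfl

def below {n : ℕ} (π : Equiv.Perm (Fin n)) (v : Fin n) : Finset (Fin n) :=
  Finset.univ.filter (fun j => j < v ∧ π.symm v < π.symm j)

def above {n : ℕ} (π : Equiv.Perm (Fin n)) (v : Fin n) : Finset (Fin n) :=
  Finset.univ.filter (fun j => v < j ∧ π.symm j < π.symm v)

lemma deg_eq {n : ℕ} (π : Equiv.Perm (Fin n)) (v : Fin n) :
    deg (permGraph π) v = (below π v).card + (above π v).card := by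
  classical
  have h : (permGraph π).neighborSet v = ↑(below π v ∪ above π v) := by
    ext j
    simp only [SimpleGraph.mem_neighborSet, permGraph_adj, below, above, Finset.coe_union,
      Set.mem_union, Finset.coe_filter, Set.mem_setOf_eq, Finset.mem_univ, true_and]
    tauto
  rw [deg, h, Set.ncard_coe_finset, Finset.card_union_of_disjoint]
  apply Finset.disjoint_left.mpr
  intro j h1 h2
  simp only [below, above, Finset.mem_filter, Finset.mem_univ, true_and] at h1 h2
  exact absurd h2.1 (asymm h1.1)

lemma filter_lt_card {n : ℕ} (v : Fin n) :
    (Finset.univ.filter (fun j => j < v)).card = (v : ℕ) := by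
  have h : Finset.univ.filter (fun j : Fin n => j < v) = Finset.Iio v := by
    ext j; simp
  rw [h, Fin.card_Iio]

lemma filter_symm_lt_card {n : ℕ} (π : Equiv.Perm (Fin n)) (v : Fin n) :
    (Finset.univ.filter (fun j => π.symm j < π.symm v)).card = (π.symm v : ℕ) := by
  have h : Finset.univ.filter (fun j => π.symm j < π.symm v)
      = (Finset.univ.filter (fun k => k < π.symm v)).image π := by
    ext j
    simp only [Finset.mem_filter, Finset.mem_univ, true_and, Finset.mem_image]
    constructor
    · intro hj; exact ⟨π.symm j, hj, π.apply_symm_apply j⟩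
    · rintro ⟨k, hk, rfl⟩; simpa using hk
  rw [h, Finset.card_image_of_injective _ π.injective, filter_lt_card]

lemma count_eq {n : ℕ} (π : Equiv.Perm (Fin n)) (v : Fin n) :
    (v : ℕ) + (above π v).card = (π.symm v : ℕ) + (below π v).card := by
  classical
  set C : Finset (Fin n) := Finset.univ.filter (fun j => π.symm j < π.symm v ∧ j < v) with hC
  have e1 : (π.symm v : ℕ) = C.card + (above π v).card := by
    rw [← filter_symm_lt_card π v,
      ← Finset.card_filter_add_card_filter_not (p := fun j => j < v)]
    congr 1
    · apply congrArg Finset.card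
      rw [Finset.filter_filter]
    · apply congrArg Finset.card
      rw [Finset.filter_filter]
      ext j
      simp only [above, Finset.mem_filter, Finset.mem_univ, true_and]
      constructor
      · rintro ⟨h1, h2⟩
        have hne : j ≠ v := fun h => absurd (h ▸ h1) (lt_irrefl _)
        exact ⟨lt_of_le_of_ne (not_lt.mp h2) hne.symm, h1⟩
      · rintro ⟨h1, h2⟩; exact ⟨h2, asymm h1⟩
  have e2 : (v : ℕ) = C.card + (below π v).card := by
    rw [← filter_lt_card v,
      ← Finset.card_filter_add_card_filter_not (p := fun j => π.symm j < π.symm v)]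
    congr 1
    · apply congrArg Finset.card
      rw [Finset.filter_filter]
      ext j
      simp only [hC, Finset.mem_filter, Finset.mem_univ, true_and]
      tauto
    · apply congrArg Finset.card
      rw [Finset.filter_filter]
      ext j
      simp only [below, Finset.mem_filter, Finset.mem_univ, true_and]
      constructor
      · rintro ⟨h1, h2⟩
        have hne : π.symm j ≠ π.symm v := fun h => absurd (π.symm.injective h) (ne_of_lt h1)
        exact ⟨h1, lt_of_le_of_ne (not_lt.mp h2) hne.symm⟩
      · rintro ⟨h1, h2⟩; exact ⟨h1, asymm h2⟩
  omega

lemma leaf_cases {n : ℕ} (π : Equiv.Perm (Fin n)) (v : Fin n)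
    (h : deg (permGraph π) v = 1) :
    ((below π v).card = 1 ∧ (above π v).card = 0 ∧ (π.symm v : ℕ) + 1 = (v : ℕ)) ∨
    ((below π v).card = 0 ∧ (above π v).card = 1 ∧ (v : ℕ) + 1 = (π.symm v : ℕ)) := by
  have h1 := count_eq π v
  have h2 := deg_eq π v
  rw [h] at h2
  omega

lemma nbhd_singleton {V : Type*} {G : SimpleGraph V} {x z : V}
    (h1 : deg G x = 1) (h : G.Adj x z) : G.neighborSet x = {z} := by
  obtain ⟨a, ha⟩ := Set.ncard_eq_one.mp h1
  have hz : z ∈ G.neighborSet x := h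
  rw [ha] at hz ⊢
  rw [Set.mem_singleton_iff.mp hz]

lemma no_K2 {V : Type*} {G : SimpleGraph V} (hconn : G.Connected) {x y : V}
    (hx : G.neighborSet x = {y}) (hy : G.neighborSet y = {x}) {v : V}
    (hvx : v ≠ x) (hvy : v ≠ y) : False := by
  have key : ∀ (u w : V) (p : G.Walk u w), (u = x ∨ u = y) → (w = x ∨ w = y) := by
    intro u w p
    induction p with
    | nil => exact id
    | cons h q ih =>
      rename_i a b c
      intro hu
      apply ih
      rcases hu with rfl | rfl
      · have hb : b ∈ G.neighborSet a := h
        rw [hx] at hb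
        exact Or.inr hb
      · have hb : b ∈ G.neighborSet a := h
        rw [hy] at hb
        exact Or.inl hb
  obtain ⟨p⟩ := hconn.preconnected x v
  rcases key x v p (Or.inl rfl) with rfl | rfl
  · exact hvx rfl
  · exact hvy rfl

set_option maxHeartbeats 1000000 in
theorem consecutive_leaves_positions {n : ℕ} (hn : 6 ≤ n) (hev : Even n)
    (π : Equiv.Perm (Fin n)) (hconn : (permGraph π).Connected)
    (hdom : domNumber (permGraph π) = n / 2)
    (i : ℕ) (hi1 : 1 ≤ i) (hi2 : i + 2 ≤ n - 1)
    (hl1 : deg (permGraph π) ⟨i, by omega⟩ = 1)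
    (hl2 : deg (permGraph π) ⟨i + 1, by omega⟩ = 1) :
    (π.symm ⟨i, by omega⟩ : ℕ) = i - 1 ∧ (π.symm ⟨i + 1, by omega⟩ : ℕ) = i + 2 := by
  classical
  have hin : i < n := by omega
  have hin1 : i + 1 < n := by omega
  set vi : Fin n := ⟨i, hin⟩ with hvi
  set vi1 : Fin n := ⟨i + 1, hin1⟩ with hvi1
  have hvival : (vi : ℕ) = i := rfl
  have hvi1val : (vi1 : ℕ) = i + 1 := rfl
  have hne : vi ≠ vi1 := by
    intro h; have := congrArg Fin.val h; simp [hvival, hvi1val] at this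
  have hvlt : vi < vi1 := by rw [Fin.lt_def]; omega
  rcases leaf_cases π vi hl1 with ⟨ha1, hb1, hp1⟩ | ⟨ha1, hb1, hp1⟩ <;>
    rcases leaf_cases π vi1 hl2 with ⟨ha2, hb2, hp2⟩ | ⟨ha2, hb2, hp2⟩
  -- case 1: p vi = i - 1, p vi1 = i : common neighbor, contradiction
  · exfalso
    rw [hvival] at hp1; rw [hvi1val] at hp2
    obtain ⟨j0, hj0⟩ := Finset.card_pos.mp (by omega : 0 < (below π vi).card)
    simp only [below, Finset.mem_filter, Finset.mem_univ, true_and] at hj0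
    obtain ⟨hj0lt, hj0gt⟩ := hj0
    have hj0v : (j0 : ℕ) < i := by rw [← hvival]; exact hj0lt
    have hpj0 : (π.symm vi : ℕ) < (π.symm j0 : ℕ) := hj0gt
    have hpj0ne : (π.symm j0 : ℕ) ≠ i := by
      intro h
      have : π.symm j0 = π.symm vi1 := Fin.ext (by omega)
      have := π.symm.injective this
      rw [this] at hj0v
      omega
    have hadj1 : (permGraph π).Adj vi j0 := Or.inr ⟨hj0lt, hj0gt⟩
    have hadj2 : (permGraph π).Adj vi1 j0 := by
      refine Or.inr ⟨?_, ?_⟩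
      · rw [Fin.lt_def]; omega
      · rw [Fin.lt_def]; omega
    have hnadj : ¬ (permGraph π).Adj vi vi1 := by
      rw [permGraph_adj, Fin.lt_def, Fin.lt_def, Fin.lt_def]
      omega
    exact dom_contra hn hev hconn hne hnadj hadj1 hadj2
      (nbhd_singleton hl1 hadj1) (nbhd_singleton hl2 hadj2) hdom
  -- case 2: p vi = i - 1, p vi1 = i + 2 : goal
  · rw [hvival] at hp1; rw [hvi1val] at hp2
    exact ⟨by omega, by omega⟩
  -- case 3: p vi = i + 1, p vi1 = i : vi, vi1 adjacent, K2 component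
  · exfalso
    rw [hvival] at hp1; rw [hvi1val] at hp2
    have hadj : (permGraph π).Adj vi vi1 := by
      refine Or.inl ⟨hvlt, ?_⟩
      rw [Fin.lt_def]; omega
    have hin0 : 0 < n := by omega
    set v0 : Fin n := ⟨0, hin0⟩ with hv0
    have hv0x : v0 ≠ vi := by
      intro h; have := congrArg Fin.val h; simp [hvival, hv0] at this; omega
    have hv0y : v0 ≠ vi1 := by
      intro h; have := congrArg Fin.val h; simp [hvi1val, hv0] at this
    exact no_K2 hconn (nbhd_singleton hl1 hadj) (nbhd_singleton hl2 hadj.symm) hv0x hv0y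
  -- case 4: p vi = i + 1, p vi1 = i + 2 : common neighbor, contradiction
  · exfalso
    rw [hvival] at hp1; rw [hvi1val] at hp2
    obtain ⟨j0, hj0⟩ := Finset.card_pos.mp (by omega : 0 < (above π vi).card)
    simp only [above, Finset.mem_filter, Finset.mem_univ, true_and] at hj0
    obtain ⟨hj0lt, hj0gt⟩ := hj0
    have hj0v : i < (j0 : ℕ) := hj0lt
    have hpj0 : (π.symm j0 : ℕ) < (π.symm vi : ℕ) := hj0gt
    have hj0ne : (j0 : ℕ) ≠ i + 1 := by
      intro h
      have : j0 = vi1 := Fin.ext h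
      rw [this] at hpj0
      omega
    have hadj1 : (permGraph π).Adj vi j0 := Or.inl ⟨hj0lt, hj0gt⟩
    have hadj2 : (permGraph π).Adj vi1 j0 := by
      refine Or.inl ⟨?_, ?_⟩
      · rw [Fin.lt_def]; omega
      · rw [Fin.lt_def]; omega
    have hnadj : ¬ (permGraph π).Adj vi vi1 := by
      rw [permGraph_adj, Fin.lt_def, Fin.lt_def, Fin.lt_def]
      omega
    exact dom_contra hn hev hconn hne hnadj hadj1 hadj2
      (nbhd_singleton hl1 hadj1) (nbhd_singleton hl2 hadj2) hdom
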